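/- arXiv:1610.04167 — 4 statements merged into one kernel-verified Lean document; each statement's English description precedes it below -/
import Mathlib

section
/- If the missingness distribution Q is MAR, then the marginalized Bayes predictor h*(x⊙m) = argmax_{y∈[K]} P(Y=y | o(x,m)) is optimal with respect to expected 0-1 loss: for every predictor h (a function of the observed masked input x⊙m only), P(h(X⊙M)=Y) ≤ P(h*(X⊙M)=Y). In particular, optimal classification under MAR missingness does not require knowledge of Q. -/
open Finset

/-- **Optimality of the marginalized Bayes predictor under MAR missingness.**
If the missingness distribution `Q` is MAR (for every mask `m`, `Q m x` depends
only on the coordinates of `x` observed under `m`), then the marginalized Bayes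
predictor `h*(x⊙m) = argmax_y P(Y=y | o(x,m))` is optimal w.r.t. expected 0-1
loss: the accuracy of any predictor `h` (depending only on the observed masked
input) is at most that of `h*`.  In particular `h*` does not require any
knowledge of `Q`. -/
theorem statement1
    {V : Type} [Fintype V] [DecidableEq V] {s K : ℕ}
    (D : (Fin s → V) × Fin K → ℝ)
    (hD0 : ∀ p, 0 ≤ D p)
    (hD1 : ∑ p : (Fin s → V) × Fin K, D p = 1)
    (Q : (Fin s → V) → (Fin s → Bool) → ℝ)
    (hQ0 : ∀ x m, 0 ≤ Q x m)
    (hQ1 : ∀ x, ∑ m : Fin s → Bool, Q x m = 1)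
    -- Q is MAR: it depends only on the mask and the observed coordinates
    (hMAR : ∀ m x x', (∀ i, m i = true → x i = x' i) → Q x m = Q x' m)
    (hstar h : (Fin s → Bool) → (Fin s → V) → Fin K)
    -- predictors depend only on the observed part of the masked input
    (hstar_obs : ∀ m x x', (∀ i, m i = true → x i = x' i) → hstar m x = hstar m x')
    (h_obs : ∀ m x x', (∀ i, m i = true → x i = x' i) → h m x = h m x')
    -- `hstar` is the marginalized Bayes predictor: it maximizes P(Y=y | o(x,m)) over y
    (hstar_argmax : ∀ m x y,
      (∑ x' : Fin s → V, if ∀ i, m i = true → x i = x' i then D (x', y) else 0) /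
          (∑ p : (Fin s → V) × Fin K, if ∀ i, m i = true → x i = p.1 i then D p else 0)
      ≤
      (∑ x' : Fin s → V, if ∀ i, m i = true → x i = x' i then D (x', hstar m x) else 0) /
          (∑ p : (Fin s → V) × Fin K, if ∀ i, m i = true → x i = p.1 i then D p else 0)) :
    -- accuracy of h  ≤  accuracy of hstar
    ∑ x : Fin s → V, ∑ y : Fin K, ∑ m : Fin s → Bool,
        D (x, y) * Q x m * (if h m x = y then 1 else 0)
      ≤
    ∑ x : Fin s → V, ∑ y : Fin K, ∑ m : Fin s → Bool,
        D (x, y) * Q x m * (if hstar m x = y then 1 else 0) := by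
  classical
  rcases isEmpty_or_nonempty (Fin s → V) with hE | hNE
  · simp
  -- collapse the y-sum and reorder
  have collapse : ∀ g : (Fin s → Bool) → (Fin s → V) → Fin K,
      (∑ x : Fin s → V, ∑ y : Fin K, ∑ m : Fin s → Bool,
        D (x, y) * Q x m * (if g m x = y then 1 else 0))
      = ∑ m : Fin s → Bool, ∑ x : Fin s → V, Q x m * D (x, g m x) := by
    intro g
    have hx : ∀ x : Fin s → V,
        (∑ y : Fin K, ∑ m : Fin s → Bool, D (x, y) * Q x m * (if g m x = y then 1 else 0))
        = ∑ m : Fin s → Bool, Q x m * D (x, g m x) := by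
      intro x
      rw [Finset.sum_comm]
      refine Finset.sum_congr rfl fun m _ => ?_
      simp [mul_ite, mul_zero, Finset.sum_ite_eq, mul_comm]
    simp_rw [hx]
    exact Finset.sum_comm
  rw [collapse h, collapse hstar]
  refine Finset.sum_le_sum fun m _ => ?_
  -- fixed mask m
  set c : ℕ := ∏ i, if m i then 1 else Fintype.card V with hc
  have hcard : ∀ x : Fin s → V,
      (univ.filter (fun z : Fin s → V => ∀ i, m i = true → z i = x i)).card = c := by
    intro x
    have hset : univ.filter (fun z : Fin s → V => ∀ i, m i = true → z i = x i)
        = Fintype.piFinset (fun i => if m i then {x i} else univ) := by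
      ext z
      simp only [mem_filter, mem_univ, true_and, Fintype.mem_piFinset]
      constructor
      · intro hz i
        by_cases hi : m i
        · simp [hi, hz i hi]
        · simp [hi]
      · intro hz i hi
        have := hz i
        simpa [hi] using this
    rw [hset, Fintype.card_piFinset]
    refine Finset.prod_congr rfl fun i _ => ?_
    by_cases hi : m i <;> simp [hi]
  have hcpos : (0 : ℝ) < (c : ℝ) := by
    obtain ⟨x₀⟩ := hNE
    have hmem : x₀ ∈ univ.filter (fun z : Fin s → V => ∀ i, m i = true → z i = x₀ i) := by
      simp
    have : 0 < (univ.filter (fun z : Fin s → V => ∀ i, m i = true → z i = x₀ i)).card :=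
      Finset.card_pos.mpr ⟨x₀, hmem⟩
    rw [hcard x₀] at this
    exact_mod_cast this
  -- scaling identity
  have key : ∀ g : (Fin s → V) → Fin K,
      (∀ x x', (∀ i, m i = true → x i = x' i) → g x = g x') →
      (c : ℝ) * ∑ x : Fin s → V, Q x m * D (x, g x)
        = ∑ x : Fin s → V, Q x m *
            ∑ x' : Fin s → V, (if ∀ i, m i = true → x i = x' i then D (x', g x) else 0) := by
    intro g hg
    have step1 : ∀ x : Fin s → V, Q x m *
          (∑ x' : Fin s → V, (if ∀ i, m i = true → x i = x' i then D (x', g x) else 0))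
        = ∑ x' : Fin s → V,
            (if ∀ i, m i = true → x i = x' i then Q x' m * D (x', g x') else 0) := by
      intro x
      rw [Finset.mul_sum]
      refine Finset.sum_congr rfl fun x' _ => ?_
      by_cases hxx : ∀ i, m i = true → x i = x' i
      · rw [if_pos hxx, if_pos hxx, hMAR m x x' hxx, hg x x' hxx]
      · rw [if_neg hxx, if_neg hxx, mul_zero]
    simp_rw [step1]
    rw [Finset.sum_comm]
    rw [Finset.mul_sum]
    refine Finset.sum_congr rfl fun x' _ => ?_
    rw [← Finset.sum_filter, Finset.sum_const, hcard x', nsmul_eq_mul]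
  -- classwise comparison
  have keyB : ∀ x : Fin s → V,
      (∑ x' : Fin s → V, if ∀ i, m i = true → x i = x' i then D (x', h m x) else 0)
      ≤ ∑ x' : Fin s → V, if ∀ i, m i = true → x i = x' i then D (x', hstar m x) else 0 := by
    intro x
    set d := ∑ p : (Fin s → V) × Fin K, if ∀ i, m i = true → x i = p.1 i then D p else 0 with hd
    have hd0 : 0 ≤ d := by
      refine Finset.sum_nonneg fun p _ => ?_
      by_cases hp : ∀ i, m i = true → x i = p.1 i
      · rw [if_pos hp]; exact hD0 p
      · rw [if_neg hp]
    rcases eq_or_lt_of_le hd0 with hdz | hdp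
    · have hall : ∀ p : (Fin s → V) × Fin K, (∀ i, m i = true → x i = p.1 i) → D p = 0 := by
        intro p hp
        have h0 := (Finset.sum_eq_zero_iff_of_nonneg (fun q _ => by
          by_cases hq : ∀ i, m i = true → x i = q.1 i
          · rw [if_pos hq]; exact hD0 q
          · rw [if_neg hq])).mp hdz.symm p (Finset.mem_univ p)
        rwa [if_pos hp] at h0
      have hz : ∀ y : Fin K,
          (∑ x' : Fin s → V, if ∀ i, m i = true → x i = x' i then D (x', y) else 0) = 0 := by
        intro y
        refine Finset.sum_eq_zero fun x' _ => ?_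
        by_cases hxx : ∀ i, m i = true → x i = x' i
        · rw [if_pos hxx]; exact hall (x', y) hxx
        · rw [if_neg hxx]
      rw [hz, hz]
    · have harg := hstar_argmax m x (h m x)
      exact (div_le_div_iff_of_pos_right hdp).mp harg
  have final : (c : ℝ) * (∑ x : Fin s → V, Q x m * D (x, h m x))
      ≤ (c : ℝ) * (∑ x : Fin s → V, Q x m * D (x, hstar m x)) := by
    rw [key _ (h_obs m), key _ (hstar_obs m)]
    exact Finset.sum_le_sum fun x _ => mul_le_mul_of_nonneg_left (keyB x) (hQ0 x m)
  exact le_of_mul_le_mul_left final hcpos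
end

section
/- There exists a data distribution D over 𝒳×𝒴 = {0,1}²×{0,1} and an MAR missingness distribution Q such that classification through data imputation is strictly suboptimal: every predictor of the form x⊙m ↦ argmax_y P(Y=y | X = g(x⊙m)) or x⊙m ↦ argmax_y P(Y=y | X = g(x⊙m; y)), where g(x⊙m) is a most-likely completion (argmax over completions x' agreeing with x on observed coordinates of P(X=x')) and g(x⊙m; y) is a most-likely class-conditional completion (argmax of P(X=x'|Y=y)), has accuracy less than half the accuracy of the marginalized Bayes predictor argmax_y P(Y=y | o(x,m)), with an absolute accuracy gap of more than 33 percentage points. Concretely, with ε = 10⁻⁴, the distribution D assigning (after normalization) weights 1−ε, 1, 1−ε, 1, 0, 1+ε, 0, 1+ε to the triples (x₁,x₂,y) = (0,0,0), (0,1,0), (1,0,0), (1,1,0), (0,0,1), (0,1,1), (1,0,1), (1,1,1) respectively, together with the missingness distribution Q that always observes X₁ and always hides X₂, yields accuracy (1+ε)/3 for both imputation-based predictors and accuracy (2−ε)/3 for the marginalized Bayes predictor. -/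
open Finset

/-- ε = 10⁻⁴ -/
noncomputable def eps : ℝ := 1 / 10000

/-- The concrete data distribution `D` over `{0,1}² × {0,1}` (Table 3 of the
paper): weights 1-ε, 1, 1-ε, 1, 0, 1+ε, 0, 1+ε for
(x₁,x₂,y) = (0,0,0),(0,1,0),(1,0,0),(1,1,0),(0,0,1),(0,1,1),(1,0,1),(1,1,1),
normalized by 6. -/
noncomputable def D3 : ((Fin 2 → Bool) × Bool) → ℝ := fun p =>
  (if p.2 then (if p.1 1 then 1 + eps else 0)
   else (if p.1 1 then 1 else 1 - eps)) / 6

/-- The mask that always observes `X₁` (coordinate 0) and always hides `X₂`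
(coordinate 1). -/
def mObs : Fin 2 → Bool := ![true, false]

/-- The missingness distribution `Q`: deterministically equal to `mObs`,
independently of `x` (hence MCAR, in particular MAR). -/
noncomputable def Q3 : (Fin 2 → Bool) → (Fin 2 → Bool) → ℝ :=
  fun _ m => if m = mObs then 1 else 0

/-- Accuracy `P(h(X⊙M) = Y)` of a predictor `h` under `D3`, `Q3`. -/
noncomputable def accuracy3 (h : (Fin 2 → Bool) → (Fin 2 → Bool) → Bool) : ℝ :=
  ∑ x : Fin 2 → Bool, ∑ y : Bool, ∑ m : Fin 2 → Bool,
    D3 (x, y) * Q3 x m * (if h m x = y then 1 else 0)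

section Aux

lemma eps_val : eps = 1/10000 := rfl

lemma sumFn2 (f : (Fin 2 → Bool) → ℝ) :
    ∑ x : Fin 2 → Bool, f x =
      f ![false,false] + f ![false,true] + f ![true,false] + f ![true,true] := by
  rw [← Equiv.sum_comp (finTwoArrowEquiv Bool).symm f]
  rw [Fintype.sum_prod_type]
  simp [finTwoArrowEquiv]
  ring

lemma accuracy3_eq (h : (Fin 2 → Bool) → (Fin 2 → Bool) → Bool) :
    accuracy3 h = ∑ x : Fin 2 → Bool, ∑ y : Bool,
      D3 (x, y) * (if h mObs x = y then 1 else 0) := by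
  unfold accuracy3 Q3
  congr 1; ext x; congr 1; ext y
  rw [Finset.sum_eq_single mObs]
  · simp
  · intro m _ hm; simp [hm]
  · simp

lemma acc_const (h : (Fin 2 → Bool) → (Fin 2 → Bool) → Bool) (c : Bool)
    (hc : ∀ x, h mObs x = c) :
    accuracy3 h = ∑ x : Fin 2 → Bool, D3 (x, c) := by
  rw [accuracy3_eq]
  congr 1; ext x
  rw [Fintype.sum_bool, hc]
  cases c <;> simp

lemma acc_true (h : (Fin 2 → Bool) → (Fin 2 → Bool) → Bool)
    (hc : ∀ x, h mObs x = true) : accuracy3 h = (1 + eps) / 3 := by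
  rw [acc_const h true hc, sumFn2]
  simp [D3]
  ring

lemma acc_false (h : (Fin 2 → Bool) → (Fin 2 → Bool) → Bool)
    (hc : ∀ x, h mObs x = false) : accuracy3 h = (2 - eps) / 3 := by
  rw [acc_const h false hc, sumFn2]
  simp [D3]
  ring

lemma agree_aux (x : Fin 2 → Bool) :
    ∀ i, mObs i = true → x i = (![x 0, true] : Fin 2 → Bool) i := by
  intro i hi
  fin_cases i
  · simp
  · simp [mObs] at hi

end Aux

/-- **Sub-optimality of classification through data imputation.**
There is a data distribution (the concrete `D3`) and an MAR missingness
distribution (the concrete `Q3`, always observing `X₁` and hiding `X₂`) such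
that: every predictor obtained by most-likely data imputation followed by Bayes
prediction — whether the completion is unconditional (`argmax_{x'} P(X=x')`) or
class-conditional (`argmax_{x'} P(X=x'|Y=y)`) — has accuracy `(1+ε)/3`, whereas
the marginalized Bayes predictor `argmax_y P(Y=y | o(x,m))` has accuracy
`(2-ε)/3`, an absolute accuracy gap of more than 33 percentage points. -/


theorem statement3 :
    -- D3 is a probability distribution
    (∀ p, 0 ≤ D3 p) ∧ (∑ p : (Fin 2 → Bool) × Bool, D3 p = 1) ∧
    -- Q3 is a missingness distribution
    (∀ x m, 0 ≤ Q3 x m) ∧ (∀ x, ∑ m : Fin 2 → Bool, Q3 x m = 1) ∧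
    -- Q3 is MAR: it depends only on the mask and the observed coordinates
    (∀ m x x', (∀ i, m i = true → x i = x' i) → Q3 x m = Q3 x' m) ∧
    -- (i) classification through unconditional data imputation has accuracy (1+ε)/3
    (∀ (g : (Fin 2 → Bool) → (Fin 2 → Bool) → (Fin 2 → Bool))
       (hU : (Fin 2 → Bool) → (Fin 2 → Bool) → Bool),
      -- g(x⊙m) agrees with x on the observed coordinates
      (∀ m x i, m i = true → g m x i = x i) →
      -- g(x⊙m) depends only on the observed masked input
      (∀ m x x', (∀ i, m i = true → x i = x' i) → g m x = g m x') →
      -- g(x⊙m) is a most likely completion: argmax over completions of P(X = x')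
      (∀ m x x', (∀ i, m i = true → x i = x' i) →
        (∑ y : Bool, D3 (x', y)) ≤ (∑ y : Bool, D3 (g m x, y))) →
      -- hU(x⊙m) = argmax_y P(Y=y | X = g(x⊙m))
      (∀ m x y, D3 (g m x, y) / (∑ y' : Bool, D3 (g m x, y'))
          ≤ D3 (g m x, hU m x) / (∑ y' : Bool, D3 (g m x, y'))) →
      accuracy3 hU = (1 + eps) / 3) ∧
    -- (ii) classification through class-conditional data imputation has accuracy (1+ε)/3
    (∀ (g : (Fin 2 → Bool) → (Fin 2 → Bool) → Bool → (Fin 2 → Bool))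
       (hC : (Fin 2 → Bool) → (Fin 2 → Bool) → Bool),
      -- g(x⊙m; y) agrees with x on the observed coordinates
      (∀ m x y i, m i = true → g m x y i = x i) →
      -- g(x⊙m; y) depends only on the observed masked input
      (∀ m x x' y, (∀ i, m i = true → x i = x' i) → g m x y = g m x' y) →
      -- g(x⊙m; y) is a most likely class-conditional completion:
      -- argmax over completions of P(X = x' | Y = y)
      (∀ m x x' y, (∀ i, m i = true → x i = x' i) →
        D3 (x', y) / (∑ x'' : Fin 2 → Bool, D3 (x'', y))
          ≤ D3 (g m x y, y) / (∑ x'' : Fin 2 → Bool, D3 (x'', y))) →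
      -- hC(x⊙m) = argmax_y P(Y=y | X = g(x⊙m; y))
      (∀ m x y, D3 (g m x y, y) / (∑ y' : Bool, D3 (g m x y, y'))
          ≤ D3 (g m x (hC m x), hC m x) /
              (∑ y' : Bool, D3 (g m x (hC m x), y'))) →
      accuracy3 hC = (1 + eps) / 3) ∧
    -- (iii) the marginalized Bayes predictor has accuracy (2-ε)/3
    (∀ hB : (Fin 2 → Bool) → (Fin 2 → Bool) → Bool,
      -- hB depends only on the observed masked input
      (∀ m x x', (∀ i, m i = true → x i = x' i) → hB m x = hB m x') →
      -- hB(x⊙m) = argmax_y P(Y=y | o(x,m))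
      (∀ m x y,
        (∑ x' : Fin 2 → Bool, if ∀ i, m i = true → x i = x' i then D3 (x', y) else 0) /
            (∑ p : (Fin 2 → Bool) × Bool, if ∀ i, m i = true → x i = p.1 i then D3 p else 0)
          ≤
        (∑ x' : Fin 2 → Bool, if ∀ i, m i = true → x i = x' i then D3 (x', hB m x) else 0) /
            (∑ p : (Fin 2 → Bool) × Bool, if ∀ i, m i = true → x i = p.1 i then D3 p else 0)) →
      accuracy3 hB = (2 - eps) / 3) ∧
    -- the absolute accuracy gap is more than 33 percentage points
    (2 - eps) / 3 - (1 + eps) / 3 > 33 / 100 := by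
  refine ⟨?_, ?_, ?_, ?_, ?_, ?_, ?_, ?_, ?_⟩
  · -- D3 nonneg
    intro p
    unfold D3
    split_ifs <;> norm_num [eps_val]
  · -- sums to 1
    rw [Fintype.sum_prod_type, sumFn2]
    norm_num [D3, Fintype.sum_bool, eps_val]
  · -- Q3 nonneg
    intro x m
    unfold Q3
    split_ifs <;> norm_num
  · -- Q3 sums to 1
    intro x
    unfold Q3
    simp
  · -- MAR
    intro m x x' _
    rfl
  · -- (i)
    intro g hU _ _ h3 h4
    apply acc_true
    intro x
    have hmax := h3 mObs x ![x 0, true] (agree_aux x)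
    have hG : (g mObs x) 1 = true := by
      by_contra hG
      rw [Bool.not_eq_true] at hG
      rw [Fintype.sum_bool, Fintype.sum_bool] at hmax
      simp [D3, hG, eps_val] at hmax
      norm_num at hmax
    have hargmax := h4 mObs x true
    by_contra hne
    rw [Bool.not_eq_true] at hne
    rw [hne, Fintype.sum_bool] at hargmax
    norm_num [D3, hG, eps_val] at hargmax
  · -- (ii)
    intro g hC _ _ h3 h4
    apply acc_true
    intro x
    have hGy : ∀ y, (g mObs x y) 1 = true := by
      intro y
      have h := h3 mObs x ![x 0, true] y (agree_aux x)
      by_contra hG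
      rw [Bool.not_eq_true] at hG
      rw [sumFn2] at h
      cases y <;> norm_num [D3, hG, eps_val] at h
    have hargmax := h4 mObs x true
    by_contra hne
    rw [Bool.not_eq_true] at hne
    rw [hne, Fintype.sum_bool, Fintype.sum_bool] at hargmax
    norm_num [D3, hGy true, hGy false, eps_val] at hargmax
  · -- (iii)
    intro hB _ harg
    apply acc_false
    intro x
    by_contra hne
    rw [Bool.not_eq_false] at hne
    have h := harg mObs x false
    rw [hne] at h
    simp only [Fintype.sum_prod_type, Fintype.sum_bool] at h
    simp only [sumFn2] at h
    cases hx : x 0 <;>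
      norm_num [mObs, Fin.forall_fin_two, hx, D3, eps_val] at h
  · -- gap
    norm_num [eps_val]
end

section
/- If 𝓕 is a PDF total set of probability density functions over ℝ^s, then 𝓕^{⊗N} = { (x₁,…,x_N) ↦ ∏_{i=1}^N f_i(x_i) : f₁,…,f_N ∈ 𝓕 } is a PDF total set of probability density functions over the product space (ℝ^s)^N. -/
open MeasureTheory Finset

/-- `f` is a probability density function w.r.t. the measure `μ`. -/
def IsPDF {α : Type*} [MeasurableSpace α] (μ : Measure α) (f : α → ℝ) : Prop :=
  Measurable f ∧ (∀ x, 0 ≤ f x) ∧ ∫ x, f x ∂μ = 1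

/-- `F` is a *PDF total* set of probability density functions w.r.t. `μ`:
every element of `F` is a PDF, and the convex span of `F` is dense (in `L¹`
norm) in the set of all PDFs. -/
def PDFTotal {α : Type*} [MeasurableSpace α] (μ : Measure α) (F : Set (α → ℝ)) : Prop :=
  (∀ f ∈ F, IsPDF μ f) ∧
  ∀ h : α → ℝ, IsPDF μ h → ∀ ε : ℝ, 0 < ε →
    ∃ (M : ℕ) (f : Fin M → (α → ℝ)) (w : Fin M → ℝ),
      (∀ i, f i ∈ F) ∧ (∀ i, 0 ≤ w i) ∧ (∑ i, w i = 1) ∧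
      ∫ x, |h x - ∑ i, w i * f i x| ∂μ < ε

namespace PDFAux

variable {α : Type*} [MeasurableSpace α] {μ : Measure α}

theorem isPDF_integrable {f : α → ℝ} (hf : IsPDF μ f) : Integrable f μ := by
  by_contra h
  have h2 := hf.2.2
  rw [integral_undef h] at h2
  exact one_ne_zero h2.symm

theorem isPDF_convex {M : ℕ} {f : Fin M → α → ℝ} {w : Fin M → ℝ}
    (hf : ∀ i, IsPDF μ (f i)) (hw : ∀ i, 0 ≤ w i) (hw1 : ∑ i, w i = 1) :
    IsPDF μ (fun x => ∑ i, w i * f i x) := by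
  refine ⟨Finset.measurable_sum _ fun i _ => (measurable_const.mul (hf i).1), fun x =>
    Finset.sum_nonneg fun i _ => mul_nonneg (hw i) ((hf i).2.1 x), ?_⟩
  rw [integral_finset_sum _ fun i _ => ((isPDF_integrable (hf i)).const_mul _)]
  simp_rw [integral_const_mul]
  simp only [fun i => (hf i).2.2, mul_one, hw1]

theorem isPDF_prod {ι : Type*} [Fintype ι] {E : Type*} [MeasureSpace E]
    [SigmaFinite (volume : Measure E)] {f : ι → E → ℝ} (hf : ∀ i, IsPDF volume (f i)) :
    IsPDF volume (fun x : ι → E => ∏ i, f i (x i)) := by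
  refine ⟨Finset.measurable_prod _ fun i _ => (hf i).1.comp (measurable_pi_apply i),
    fun x => Finset.prod_nonneg fun i _ => (hf i).2.1 _, ?_⟩
  rw [MeasureTheory.integral_fintype_prod_volume_eq_prod f]
  exact Finset.prod_eq_one fun i _ => (hf i).2.2

theorem abs_prod_sub_prod_le {ι : Type*} [DecidableEq ι] (S : Finset ι) (a b : ι → ℝ)
    (ha : ∀ i, 0 ≤ a i) (hb : ∀ i, 0 ≤ b i) :
    |∏ i ∈ S, a i - ∏ i ∈ S, b i| ≤ ∑ i ∈ S, |a i - b i| * ∏ j ∈ S.erase i, (a j + b j) := by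
  induction S using Finset.induction_on with
  | empty => simp
  | insert i S' hi ih =>
    rw [Finset.prod_insert hi, Finset.prod_insert hi, Finset.sum_insert hi,
      Finset.erase_insert hi]
    have key : a i * ∏ j ∈ S', a j - b i * ∏ j ∈ S', b j
        = a i * (∏ j ∈ S', a j - ∏ j ∈ S', b j) + (a i - b i) * ∏ j ∈ S', b j := by ring
    have hY : |(a i - b i) * ∏ j ∈ S', b j| ≤ |a i - b i| * ∏ j ∈ S', (a j + b j) := by
      rw [abs_mul, abs_of_nonneg (Finset.prod_nonneg fun j _ => hb j)]
      exact mul_le_mul_of_nonneg_left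
        (Finset.prod_le_prod (fun j _ => hb j) (fun j _ => le_add_of_nonneg_left (ha j)))
        (abs_nonneg _)
    have hX : |a i * (∏ j ∈ S', a j - ∏ j ∈ S', b j)|
        ≤ ∑ j ∈ S', |a j - b j| * ∏ l ∈ (insert i S').erase j, (a l + b l) := by
      rw [abs_mul, abs_of_nonneg (ha i)]
      calc a i * |∏ j ∈ S', a j - ∏ j ∈ S', b j|
          ≤ a i * ∑ j ∈ S', |a j - b j| * ∏ l ∈ S'.erase j, (a l + b l) :=
            mul_le_mul_of_nonneg_left ih (ha i)
        _ ≤ ∑ j ∈ S', |a j - b j| * ∏ l ∈ (insert i S').erase j, (a l + b l) := by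
            rw [Finset.mul_sum]
            refine Finset.sum_le_sum fun j hj => ?_
            rw [Finset.erase_insert_of_ne (Ne.symm (fun (h : j = i) => hi (h ▸ hj)))]
            rw [Finset.prod_insert (fun h => hi (Finset.mem_of_mem_erase h))]
            calc a i * (|a j - b j| * ∏ l ∈ S'.erase j, (a l + b l))
                ≤ (a i + b i) * (|a j - b j| * ∏ l ∈ S'.erase j, (a l + b l)) :=
                  mul_le_mul_of_nonneg_right (le_add_of_nonneg_right (hb i))
                    (mul_nonneg (abs_nonneg _) (Finset.prod_nonneg fun l _ =>
                      add_nonneg (ha l) (hb l)))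
              _ = |a j - b j| * ((a i + b i) * ∏ l ∈ S'.erase j, (a l + b l)) := by ring
    calc |a i * ∏ j ∈ S', a j - b i * ∏ j ∈ S', b j|
        = |a i * (∏ j ∈ S', a j - ∏ j ∈ S', b j) + (a i - b i) * ∏ j ∈ S', b j| := by rw [key]
      _ ≤ |a i * (∏ j ∈ S', a j - ∏ j ∈ S', b j)| + |(a i - b i) * ∏ j ∈ S', b j| := abs_add_le _ _
      _ ≤ (∑ j ∈ S', |a j - b j| * ∏ l ∈ (insert i S').erase j, (a l + b l))
          + |a i - b i| * ∏ j ∈ S', (a j + b j) := add_le_add hX hY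
      _ = _ := add_comm _ _
theorem prod_L1_le {ι : Type*} [Fintype ι] {E : Type*} [MeasureSpace E]
    [SigmaFinite (volume : Measure E)] {f g : ι → E → ℝ}
    (hf : ∀ i, IsPDF volume (f i)) (hg : ∀ i, IsPDF volume (g i)) :
    ∫ x : ι → E, |∏ i, f i (x i) - ∏ i, g i (x i)| ≤
      ∑ i, (∫ y, |f i y - g i y|) * 2 ^ (Fintype.card ι - 1) := by
  classical
  set u : ι → ι → E → ℝ :=
    fun i j y => if j = i then |f j y - g j y| else f j y + g j y with hu
  have hu_int : ∀ i j, Integrable (u i j) := by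
    intro i j
    by_cases h : j = i
    · simpa [hu, h] using ((isPDF_integrable (hf j)).sub (isPDF_integrable (hg j))).abs
    · simp only [hu, if_neg h]; exact (isPDF_integrable (hf j)).add (isPDF_integrable (hg j))
  have key : ∀ (i : ι) (x : ι → E),
      |f i (x i) - g i (x i)| * ∏ j ∈ Finset.univ.erase i, (f j (x j) + g j (x j))
        = ∏ j, u i j (x j) := by
    intro i x
    rw [← Finset.mul_prod_erase Finset.univ (fun j => u i j (x j)) (Finset.mem_univ i)]
    congr 1
    · simp [hu]
    · exact Finset.prod_congr rfl fun j hj => by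
        simp [hu, Finset.ne_of_mem_erase hj]
  have habs : ∀ x : ι → E,
      |∏ i, f i (x i) - ∏ i, g i (x i)| ≤ ∑ i, ∏ j, u i j (x j) := by
    intro x
    calc |∏ i, f i (x i) - ∏ i, g i (x i)|
        ≤ ∑ i, |f i (x i) - g i (x i)| * ∏ j ∈ Finset.univ.erase i, (f j (x j) + g j (x j)) :=
          abs_prod_sub_prod_le Finset.univ (fun i => f i (x i)) (fun i => g i (x i))
            (fun i => (hf i).2.1 _) (fun i => (hg i).2.1 _)
      _ = ∑ i, ∏ j, u i j (x j) := Finset.sum_congr rfl fun i _ => key i x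
  have hint_term : ∀ i, Integrable (fun x : ι → E => ∏ j, u i j (x j)) := fun i =>
    Integrable.fintype_prod (fun j => hu_int i j)
  have hLHS : Integrable (fun x : ι → E => |∏ i, f i (x i) - ∏ i, g i (x i)|) :=
    ((Integrable.fintype_prod fun i => isPDF_integrable (hf i)).sub
      (Integrable.fintype_prod fun i => isPDF_integrable (hg i))).abs
  calc ∫ x : ι → E, |∏ i, f i (x i) - ∏ i, g i (x i)|
      ≤ ∫ x : ι → E, ∑ i, ∏ j, u i j (x j) :=
        integral_mono hLHS (integrable_finset_sum _ fun i _ => hint_term i) habs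
    _ = ∑ i, ∫ x : ι → E, ∏ j, u i j (x j) :=
        integral_finset_sum _ fun i _ => hint_term i
    _ = ∑ i, ∏ j, ∫ y, u i j y :=
        Finset.sum_congr rfl fun i _ => MeasureTheory.integral_fintype_prod_volume_eq_prod (u i)
    _ = ∑ i, (∫ y, |f i y - g i y|) * 2 ^ (Fintype.card ι - 1) := by
        refine Finset.sum_congr rfl fun i _ => ?_
        rw [← Finset.mul_prod_erase Finset.univ (fun j => ∫ y, u i j y) (Finset.mem_univ i)]
        congr 1
        · simp [hu]
        · calc ∏ j ∈ Finset.univ.erase i, ∫ y, u i j y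
              = ∏ j ∈ Finset.univ.erase i, (2 : ℝ) := by
                refine Finset.prod_congr rfl fun j hj => ?_
                have hne := Finset.ne_of_mem_erase hj
                simp only [hu, if_neg hne]
                rw [integral_add (isPDF_integrable (hf j)) (isPDF_integrable (hg j)),
                  (hf j).2.2, (hg j).2.2]
                norm_num
            _ = 2 ^ (Fintype.card ι - 1) := by
                rw [Finset.prod_const, Finset.card_erase_of_mem (Finset.mem_univ i),
                  Finset.card_univ]

theorem convex_package {β : Type*} [MeasurableSpace β] {ν : Measure β} {G : Set (β → ℝ)}
    {κ : Type*} [Fintype κ] (v : κ → ℝ) (ψ : κ → β → ℝ) (hψ : ∀ k, ψ k ∈ G)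
    (hv : ∀ k, 0 ≤ v k) (hv1 : ∑ k, v k = 1) (h : β → ℝ) {ε : ℝ}
    (herr : ∫ x, |h x - ∑ k, v k * ψ k x| ∂ν < ε) :
    ∃ (M : ℕ) (f : Fin M → (β → ℝ)) (w : Fin M → ℝ),
      (∀ i, f i ∈ G) ∧ (∀ i, 0 ≤ w i) ∧ (∑ i, w i = 1) ∧
      ∫ x, |h x - ∑ i, w i * f i x| ∂ν < ε := by
  classical
  let e := Fintype.equivFin κ
  refine ⟨Fintype.card κ, fun i => ψ (e.symm i), fun i => v (e.symm i),
    fun i => hψ _, fun i => hv _, ?_, ?_⟩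
  · rw [Equiv.sum_comp e.symm v, hv1]
  · have hx : ∀ x, (∑ i, v (e.symm i) * ψ (e.symm i) x) = ∑ k, v k * ψ k x := fun x =>
      Equiv.sum_comp e.symm (fun k => v k * ψ k x)
    simpa only [hx] using herr

theorem sum_pi_prod {N : ℕ} (M : Fin N → ℕ) (a : (i : Fin N) → Fin (M i) → ℝ) :
    ∑ cc : ((i : Fin N) → Fin (M i)), ∏ i, a i (cc i) = ∏ i, ∑ l, a i l := by
  classical
  rw [Finset.prod_univ_sum]
  rw [Fintype.piFinset_univ]

end PDFAux

set_option maxHeartbeats 2000000 in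
/-- **PDF totality is preserved under products.**  If `F` is a PDF total set of
densities over `ℝ^s`, then `F^{⊗N} = {(x₁,…,x_N) ↦ ∏ᵢ fᵢ(xᵢ) : fᵢ ∈ F}` is a
PDF total set of densities over the product space `(ℝ^s)^N`. -/
theorem statement4 {s N : ℕ} (F : Set ((Fin s → ℝ) → ℝ))
    (hF : PDFTotal (volume : Measure (Fin s → ℝ)) F) :
    PDFTotal (volume : Measure (Fin N → Fin s → ℝ))
      {g | ∃ f : Fin N → ((Fin s → ℝ) → ℝ),
            (∀ i, f i ∈ F) ∧ g = fun x => ∏ i, f i (x i)} := by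
  classical
  constructor
  · rintro g ⟨f, hfF, rfl⟩
    exact PDFAux.isPDF_prod fun i => hF.1 _ (hfF i)
  intro h hh ε hε
  haveI : (volume : Measure (Fin N → Fin s → ℝ)).Regular :=
    MeasureTheory.Measure.Regular.of_sigmaCompactSpace_of_isLocallyFiniteMeasure _
  have hh_int : Integrable h := PDFAux.isPDF_integrable hh
  set ε₀ : ℝ := min ε 1 with hε₀
  have hε₀pos : 0 < ε₀ := lt_min hε zero_lt_one
  have hε₀le : ε₀ ≤ ε := min_le_left _ _
  have hε₀1 : ε₀ ≤ 1 := min_le_right _ _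
  -- Step 1: approximate by nonnegative continuous compactly supported k
  obtain ⟨k, hk_supp, hk_cont, hk_nonneg, hk_int, err1⟩ :
      ∃ k : (Fin N → Fin s → ℝ) → ℝ, HasCompactSupport k ∧ Continuous k ∧ (∀ x, 0 ≤ k x) ∧
        Integrable k ∧ ∫ x, |h x - k x| ≤ ε₀/8 := by
    obtain ⟨k₀, hk₀_supp, err₀, hk₀_cont, hk₀_int⟩ :=
      hh_int.exists_hasCompactSupport_integral_sub_le (by positivity : (0:ℝ) < ε₀/8)
    refine ⟨fun x => max (k₀ x) 0, hk₀_supp.mono ?_, hk₀_cont.max continuous_const,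
      fun x => le_max_right _ _, hk₀_int.pos_part, ?_⟩
    · intro x hx
      simp only [Function.mem_support] at hx ⊢
      intro hc
      apply hx
      rw [hc]
      simp
    · have hpt : ∀ x, |h x - max (k₀ x) 0| ≤ ‖h x - k₀ x‖ := by
        intro x
        rw [Real.norm_eq_abs]
        rcases le_total (k₀ x) 0 with hc | hc
        · rw [max_eq_right hc, sub_zero, abs_of_nonneg (hh.2.1 x),
            abs_of_nonneg (by linarith [hh.2.1 x] : (0:ℝ) ≤ h x - k₀ x)]
          linarith
        · rw [max_eq_left hc]
      calc ∫ x, |h x - max (k₀ x) 0| ≤ ∫ x, ‖h x - k₀ x‖ :=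
            integral_mono ((hh_int.sub hk₀_int.pos_part).abs) ((hh_int.sub hk₀_int).norm) hpt
        _ ≤ ε₀/8 := err₀
  -- Step 2: radius of support
  obtain ⟨R, hR⟩ : ∃ R : ℝ, ∀ y : Fin N → Fin s → ℝ, R < ‖y‖ → k y = 0 := by
    obtain ⟨R, hRball⟩ := hk_supp.isBounded.subset_closedBall (0 : Fin N → Fin s → ℝ)
    refine ⟨R, fun y hy => ?_⟩
    apply image_eq_zero_of_notMem_tsupport
    intro hmem
    have h2 := hRball hmem
    rw [Metric.mem_closedBall, dist_zero_right] at h2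
    linarith
  -- Step 3: grid parameters
  set V : ℝ := (volume (Metric.closedBall (0 : Fin N → Fin s → ℝ) (R+1))).toReal with hV
  have hV0 : 0 ≤ V := ENNReal.toReal_nonneg
  set η : ℝ := ε₀/(8*(V+1)) with hη
  have hηpos : 0 < η := by positivity
  obtain ⟨δu, hδupos, hδu⟩ := Metric.uniformContinuous_iff.mp
    (hk_supp.uniformContinuous_of_continuous hk_cont) η hηpos
  obtain ⟨n', hn'⟩ := exists_nat_one_div_lt hδupos
  set n : ℕ := n' + 1 with hn
  have hnpos : (0:ℝ) < n := by positivity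
  have hn1 : 1/(n:ℝ) < δu := by
    have : ((n':ℝ) + 1) = (n:ℝ) := by rw [hn]; push_cast; ring
    rwa [this] at hn'
  -- Step 4: the snapped step function g
  set snapZ : (Fin N → Fin s → ℝ) → (Fin N → Fin s → ℤ) := fun x i j => ⌊x i j * n⌋ with hsnapZ
  set snap : (Fin N → Fin s → ℝ) → (Fin N → Fin s → ℝ) :=
    fun x i j => (snapZ x i j : ℝ)/n with hsnap
  set g : (Fin N → Fin s → ℝ) → ℝ := fun x => k (snap x) with hg
  have hsnap_dist : ∀ x, dist x (snap x) ≤ 1/(n:ℝ) := by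
    intro x
    rw [dist_pi_le_iff (by positivity : (0:ℝ) ≤ 1/n)]
    intro i
    rw [dist_pi_le_iff (by positivity : (0:ℝ) ≤ 1/n)]
    intro j
    simp only [hsnap, hsnapZ]
    rw [Real.dist_eq]
    have h1 : ((⌊x i j * n⌋ : ℝ)) ≤ x i j * n := Int.floor_le _
    have h2 : x i j * n < ⌊x i j * n⌋ + 1 := Int.lt_floor_add_one _
    have ha : (⌊x i j * (n:ℝ)⌋ : ℝ)/n ≤ x i j := by
      rw [div_le_iff₀ hnpos]; exact h1
    have hb : x i j ≤ (⌊x i j * (n:ℝ)⌋ : ℝ)/n + 1/n := by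
      rw [← add_div, le_div_iff₀ hnpos]; linarith
    rw [abs_le]
    constructor
    · have : (0:ℝ) ≤ 1/n := by positivity
      linarith
    · linarith
  have hkg : ∀ x, |k x - g x| ≤ η := by
    intro x
    have hd2 : dist x (snap x) < δu := lt_of_le_of_lt (hsnap_dist x) hn1
    have h3 := (hδu hd2).le
    rw [Real.dist_eq] at h3
    simpa only [hg] using h3
  have hsnap_meas : Measurable snap := by
    rw [hsnap]
    apply measurable_pi_lambda
    intro i
    apply measurable_pi_lambda
    intro j
    apply Measurable.div_const
    have h1 : Measurable fun x : Fin N → Fin s → ℝ => ⌊x i j * (n:ℝ)⌋ := by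
      apply Measurable.floor
      exact ((measurable_pi_apply j).comp (measurable_pi_apply i)).mul_const _
    exact (measurable_from_top (f := fun z : ℤ => (z : ℝ))).comp h1
  have hg_meas : Measurable g := by
    rw [hg]
    exact hk_cont.measurable.comp hsnap_meas
  have hn_le1 : 1/(n:ℝ) ≤ 1 := by
    rw [div_le_one hnpos]
    exact_mod_cast Nat.one_le_iff_ne_zero.mpr (by omega)
  have hsnapfar : ∀ x : Fin N → Fin s → ℝ, R + 1 < ‖x‖ → k (snap x) = 0 := by
    intro x hx
    apply hR
    have h1 : ‖x - snap x‖ ≤ 1/(n:ℝ) := by rw [← dist_eq_norm]; exact hsnap_dist x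
    have h2 := norm_sub_norm_le x (snap x)
    linarith
  obtain ⟨Ck, hCk⟩ := hk_cont.bounded_above_of_compact_support hk_supp
  have hbnd_int : Integrable
      ((Metric.closedBall (0 : Fin N → Fin s → ℝ) (R+1)).indicator (fun _ => Ck)) := by
    rw [integrable_indicator_iff measurableSet_closedBall]
    refine integrableOn_const ?_
    exact (isCompact_closedBall _ _).measure_lt_top.ne
  have hg_int : Integrable g := by
    refine Integrable.mono' hbnd_int hg_meas.aestronglyMeasurable (Filter.Eventually.of_forall ?_)
    intro x
    by_cases hx : x ∈ Metric.closedBall (0 : Fin N → Fin s → ℝ) (R+1)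
    · rw [Set.indicator_of_mem hx]
      simp only [hg]
      exact hCk _
    · rw [Set.indicator_of_notMem hx]
      have hxn : R + 1 < ‖x‖ := by
        rw [Metric.mem_closedBall, dist_zero_right, not_le] at hx
        exact hx
      simp only [hg]
      rw [hsnapfar x hxn]
      simp
  have err2 : ∫ x, |k x - g x| ≤ ε₀/8 := by
    have hbnd_int2 : Integrable
        ((Metric.closedBall (0 : Fin N → Fin s → ℝ) (R+1)).indicator (fun _ => η)) := by
      rw [integrable_indicator_iff measurableSet_closedBall]
      refine integrableOn_const ?_
      exact (isCompact_closedBall _ _).measure_lt_top.ne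
    have hpt : ∀ x, |k x - g x| ≤
        (Metric.closedBall (0 : Fin N → Fin s → ℝ) (R+1)).indicator (fun _ => η) x := by
      intro x
      by_cases hx : x ∈ Metric.closedBall (0 : Fin N → Fin s → ℝ) (R+1)
      · rw [Set.indicator_of_mem hx]
        exact hkg x
      · rw [Set.indicator_of_notMem hx]
        have hxn : R + 1 < ‖x‖ := by
          rw [Metric.mem_closedBall, dist_zero_right, not_le] at hx
          exact hx
        have h1 : k x = 0 := hR x (by linarith)
        have h2 : g x = 0 := by simp only [hg]; exact hsnapfar x hxn
        rw [h1, h2]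
        simp
    calc ∫ x, |k x - g x|
        ≤ ∫ x, (Metric.closedBall (0 : Fin N → Fin s → ℝ) (R+1)).indicator (fun _ => η) x :=
          integral_mono ((hk_int.sub hg_int).abs) hbnd_int2 hpt
      _ = V * η := by
          rw [integral_indicator_const _ measurableSet_closedBall, smul_eq_mul, measureReal_def, ← hV]
      _ ≤ (V+1) * η := by
          refine mul_le_mul_of_nonneg_right (by linarith) hηpos.le
      _ = ε₀/8 := by
          rw [hη]
          field_simp
  -- Step 5: the grid densities
  set C : ℤ := ⌈R * n⌉ with hC
  set S : Finset (Fin N → Fin s → ℤ) :=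
    Fintype.piFinset fun _ => Fintype.piFinset fun _ => Finset.Icc (-C) C with hS
  set eD : ℤ → ℝ → ℝ :=
    fun a t => (Set.Ico ((a : ℝ)/n) (((a : ℝ)+1)/n)).indicator (fun _ => (n : ℝ)) t with heD
  have hmem : ∀ (a : ℤ) (t : ℝ),
      t ∈ Set.Ico ((a : ℝ)/n) (((a : ℝ)+1)/n) ↔ ⌊t * (n:ℝ)⌋ = a := by
    intro a t
    rw [Set.mem_Ico, Int.floor_eq_iff, div_le_iff₀ hnpos, lt_div_iff₀ hnpos]
  have heD_pdf : ∀ a, IsPDF (volume : Measure ℝ) (eD a) := by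
    intro a
    simp only [heD]
    refine ⟨measurable_const.indicator measurableSet_Ico,
      fun t => Set.indicator_nonneg (fun _ _ => by positivity) t, ?_⟩
    rw [integral_indicator_const _ measurableSet_Ico, measureReal_def, Real.volume_Ico]
    have h1 : ((a:ℝ)+1)/n - (a:ℝ)/n = 1/n := by field_simp; ring
    rw [h1, ENNReal.toReal_ofReal (by positivity), smul_eq_mul]
    field_simp
  have heD_eq : ∀ a t, eD a t = if ⌊t * (n:ℝ)⌋ = a then (n:ℝ) else 0 := by
    intro a t
    rw [heD]
    simp only [Set.indicator_apply, hmem a t]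
  set d : (Fin s → ℤ) → (Fin s → ℝ) → ℝ := fun a y => ∏ j, eD (a j) (y j) with hd
  have hd_pdf : ∀ a, IsPDF (volume : Measure (Fin s → ℝ)) (d a) := fun a =>
    PDFAux.isPDF_prod fun j => heD_pdf (a j)
  set P : (Fin N → Fin s → ℤ) → (Fin N → Fin s → ℝ) → ℝ :=
    fun m x => ∏ i, d (m i) (x i) with hP
  have hP_pdf : ∀ m, IsPDF volume (P m) := fun m => PDFAux.isPDF_prod fun i => hd_pdf (m i)
  have hP_int : ∀ m, Integrable (P m) := fun m => PDFAux.isPDF_integrable (hP_pdf m)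
  set c : ℝ := ∏ _i : Fin N, ∏ _j : Fin s, (n:ℝ) with hc
  have hcpos : 0 < c := Finset.prod_pos fun i _ => Finset.prod_pos fun j _ => hnpos
  have hP_eval : ∀ m x, P m x = if snapZ x = m then c else 0 := by
    intro m x
    by_cases hm : snapZ x = m
    · rw [if_pos hm]
      simp only [hP, hd, hc]
      refine Finset.prod_congr rfl fun i _ => Finset.prod_congr rfl fun j _ => ?_
      rw [heD_eq, if_pos]
      have h2 := congrFun (congrFun hm i) j
      simp only [hsnapZ] at h2
      exact h2
    · rw [if_neg hm]
      obtain ⟨i, hi⟩ := Function.ne_iff.mp hm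
      obtain ⟨j, hj⟩ := Function.ne_iff.mp hi
      simp only [hP, hd]
      refine Finset.prod_eq_zero (Finset.mem_univ i) (Finset.prod_eq_zero (Finset.mem_univ j) ?_)
      rw [heD_eq, if_neg]
      intro hfl
      apply hj
      simp only [hsnapZ]
      exact hfl
  set w : (Fin N → Fin s → ℤ) → ℝ := fun m => k (fun i j => (m i j : ℝ)/n) / c with hw
  have hw_nonneg : ∀ m, 0 ≤ w m := fun m => div_nonneg (hk_nonneg _) hcpos.le
  have hout : ∀ x, snapZ x ∉ S → k (snap x) = 0 := by
    intro x hx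
    rw [hS] at hx
    simp only [Fintype.mem_piFinset, not_forall] at hx
    obtain ⟨i, j, hj⟩ := hx
    rw [Finset.mem_Icc, not_and_or, not_le, not_le] at hj
    have hZ : C + 1 ≤ |snapZ x i j| := by
      rcases hj with hj | hj
      · calc C + 1 ≤ -(snapZ x i j) := by omega
          _ ≤ |snapZ x i j| := neg_le_abs _
      · calc C + 1 ≤ snapZ x i j := by omega
          _ ≤ |snapZ x i j| := le_abs_self _
    have hcast : (C:ℝ) + 1 ≤ |((snapZ x i j : ℤ) : ℝ)| := by
      rw [← Int.cast_abs]
      exact_mod_cast hZ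
    have hRn : R * n < (C:ℝ) + 1 := by
      have := Int.le_ceil (R * (n:ℝ))
      rw [← hC] at this
      linarith
    have h2 : R < |((snapZ x i j : ℤ) : ℝ)| / n := by
      rw [lt_div_iff₀ hnpos]
      linarith
    apply hR
    have e1 : |((snapZ x i j : ℤ) : ℝ)|/n = |snap x i j| := by
      simp only [hsnap]
      rw [abs_div, abs_of_pos hnpos]
    calc R < |snap x i j| := by rw [← e1]; exact h2
      _ ≤ ‖snap x i‖ := by rw [← Real.norm_eq_abs]; exact norm_le_pi_norm (snap x i) j
      _ ≤ ‖snap x‖ := norm_le_pi_norm (snap x) i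
  have hg_sum : ∀ x, g x = ∑ m ∈ S, w m * P m x := by
    intro x
    by_cases hx : snapZ x ∈ S
    · rw [Finset.sum_eq_single_of_mem (snapZ x) hx]
      · rw [hP_eval, if_pos rfl]
        simp only [hw]
        rw [div_mul_cancel₀ _ hcpos.ne']
      · intro m hm hne
        rw [hP_eval, if_neg (fun h2 => hne h2.symm), mul_zero]
    · rw [Finset.sum_eq_zero (fun m hm =>
        by rw [hP_eval, if_neg (fun h2 => hx (by rw [h2]; exact hm)), mul_zero])]
      simp only [hg]
      exact hout x hx
  set W : ℝ := ∑ m ∈ S, w m with hW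
  have hgW : ∫ x, g x = W := by
    calc ∫ x, g x = ∫ x, ∑ m ∈ S, w m * P m x := by simp only [hg_sum]
      _ = ∑ m ∈ S, ∫ x, w m * P m x := integral_finset_sum _ fun m _ => (hP_int m).const_mul _
      _ = ∑ m ∈ S, w m := by
          refine Finset.sum_congr rfl fun m _ => ?_
          rw [integral_const_mul, (hP_pdf m).2.2, mul_one]
      _ = W := hW.symm
  have err_hg : ∫ x, |h x - g x| ≤ ε₀/4 := by
    have hpt : ∀ x, |h x - g x| ≤ |h x - k x| + |k x - g x| := fun x => by
      have h2 : h x - g x = (h x - k x) + (k x - g x) := by ring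
      rw [h2]; exact abs_add_le _ _
    have i1 : Integrable (fun x => |h x - k x|) := (hh_int.sub hk_int).abs
    have i2 : Integrable (fun x => |k x - g x|) := (hk_int.sub hg_int).abs
    calc ∫ x, |h x - g x| ≤ ∫ x, (|h x - k x| + |k x - g x|) :=
          integral_mono ((hh_int.sub hg_int).abs) (i1.add i2) hpt
      _ = (∫ x, |h x - k x|) + ∫ x, |k x - g x| := integral_add i1 i2
      _ ≤ ε₀/8 + ε₀/8 := add_le_add err1 err2
      _ = ε₀/4 := by ring
  have hW1 : |W - 1| ≤ ε₀/4 := by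
    have hWeq : W - 1 = ∫ x, (g x - h x) := by
      rw [integral_sub hg_int hh_int, hgW, hh.2.2]
    rw [hWeq]
    have habs : ∀ x, |g x - h x| = |h x - g x| := fun x => abs_sub_comm _ _
    calc |∫ x, (g x - h x)| ≤ ∫ x, |g x - h x| := by
          simpa [Real.norm_eq_abs] using norm_integral_le_integral_norm (fun x => g x - h x)
      _ = ∫ x, |h x - g x| := by simp only [habs]
      _ ≤ ε₀/4 := err_hg
  have hWpos : 0 < W := by
    have h4 : ε₀/4 ≤ 1/4 := by linarith
    have := abs_le.mp hW1
    linarith [this.1]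
  -- Step 6: approximate the grid densities by elements of F
  set B : ℝ := (N:ℝ) * 2 ^ (N-1) with hB
  have hB0 : 0 ≤ B := by positivity
  set δ' : ℝ := ε₀/(8 * (B + 1)) with hδ'
  have hδ'pos : 0 < δ' := by positivity
  have hchoice : ∀ (m : {m // m ∈ S}) (i : Fin N),
      ∃ (M : ℕ) (fq : Fin M → ((Fin s → ℝ) → ℝ)) (wq : Fin M → ℝ),
      (∀ l, fq l ∈ F) ∧ (∀ l, 0 ≤ wq l) ∧ (∑ l, wq l = 1) ∧
      ∫ y, |d (m.1 i) y - ∑ l, wq l * fq l y| < δ' := fun m i => hF.2 _ (hd_pdf _) _ hδ'pos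
  choose Mq fq wq hfqF hwq0 hwq1 hqerr using hchoice
  set q : {m // m ∈ S} → Fin N → (Fin s → ℝ) → ℝ :=
    fun m i y => ∑ l, wq m i l * fq m i l y with hq
  have hq_pdf : ∀ m i, IsPDF volume (q m i) := fun m i =>
    PDFAux.isPDF_convex (fun l => hF.1 _ (hfqF m i l)) (hwq0 m i) (hwq1 m i)
  set Q : {m // m ∈ S} → (Fin N → Fin s → ℝ) → ℝ := fun m x => ∏ i, q m i (x i) with hQ
  have hQ_pdf : ∀ m, IsPDF volume (Q m) := fun m => PDFAux.isPDF_prod fun i => hq_pdf m i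
  have hQ_int : ∀ m, Integrable (Q m) := fun m => PDFAux.isPDF_integrable (hQ_pdf m)
  have hPQ : ∀ m : {m // m ∈ S}, ∫ x, |P m.1 x - Q m x| ≤ B * δ' := by
    intro m
    calc ∫ x, |P m.1 x - Q m x|
        = ∫ x : Fin N → Fin s → ℝ, |∏ i, d (m.1 i) (x i) - ∏ i, q m i (x i)| := by
          simp only [hP, hQ]
      _ ≤ ∑ i : Fin N, (∫ y, |d (m.1 i) y - q m i y|) * 2 ^ (Fintype.card (Fin N) - 1) :=
          PDFAux.prod_L1_le (fun i => hd_pdf _) (fun i => hq_pdf m i)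
      _ ≤ ∑ _i : Fin N, δ' * 2 ^ (N-1) := by
          refine Finset.sum_le_sum fun i _ => ?_
          rw [Fintype.card_fin]
          refine mul_le_mul_of_nonneg_right ?_ (by positivity)
          have h2 := hqerr m i
          simp only [hq]
          exact h2.le
      _ = B * δ' := by
          rw [Finset.sum_const, Finset.card_univ, Fintype.card_fin, nsmul_eq_mul, hB]
          ring
  -- Step 7: total error estimate
  have hsum_w' : ∑ m ∈ S.attach, w m.1 / W = 1 := by
    rw [← Finset.sum_div, Finset.sum_attach S w, ← hW, div_self hWpos.ne']
  have hBδ : B * δ' ≤ ε₀/8 := by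
    calc B * δ' ≤ (B + 1) * δ' := mul_le_mul_of_nonneg_right (by linarith) hδ'pos.le
      _ = ε₀/8 := by rw [hδ']; field_simp
  have total : ∫ x, |h x - ∑ m ∈ S.attach, (w m.1 / W) * Q m x| < ε := by
    set g2 : (Fin N → Fin s → ℝ) → ℝ := fun x => ∑ m ∈ S.attach, (w m.1/W) * P m.1 x with hg2
    set p : (Fin N → Fin s → ℝ) → ℝ := fun x => ∑ m ∈ S.attach, (w m.1/W) * Q m x with hp
    have i_g2 : Integrable g2 := integrable_finset_sum _ fun m _ => (hP_int m.1).const_mul _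
    have i_p : Integrable p := integrable_finset_sum _ fun m _ => (hQ_int m).const_mul _
    have hg2S : ∀ x, g2 x = ∑ m ∈ S, (w m / W) * P m x := fun x =>
      Finset.sum_attach S (fun m => (w m / W) * P m x)
    -- error between g and g2
    have err3 : ∫ x, |g x - g2 x| ≤ ε₀/4 := by
      have key : ∀ x, |g x - g2 x| ≤ ∑ m ∈ S, (w m * (|W - 1|/W)) * P m x := by
        intro x
        rw [hg_sum x, hg2S x, ← Finset.sum_sub_distrib]
        refine (Finset.abs_sum_le_sum_abs _ _).trans (Finset.sum_le_sum fun m hm => ?_)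
        rw [← sub_mul, abs_mul, abs_of_nonneg ((hP_pdf m).2.1 x)]
        refine mul_le_mul_of_nonneg_right ?_ ((hP_pdf m).2.1 x)
        have h2 : w m - w m / W = w m * ((W-1)/W) := by field_simp
        rw [h2, abs_mul, abs_div (W-1) W, abs_of_pos hWpos, abs_of_nonneg (hw_nonneg m)]
      have iR : Integrable (fun x => ∑ m ∈ S, (w m * (|W - 1|/W)) * P m x) :=
        integrable_finset_sum _ fun m _ => (hP_int m).const_mul _
      calc ∫ x, |g x - g2 x| ≤ ∫ x, ∑ m ∈ S, (w m * (|W - 1|/W)) * P m x :=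
            integral_mono ((hg_int.sub i_g2).abs) iR key
        _ = ∑ m ∈ S, (w m * (|W - 1|/W)) * ∫ x, P m x := by
            rw [integral_finset_sum _ fun m _ => (hP_int m).const_mul _]
            exact Finset.sum_congr rfl fun m _ => integral_const_mul _ _
        _ = ∑ m ∈ S, w m * (|W - 1|/W) := by
            refine Finset.sum_congr rfl fun m _ => ?_
            rw [(hP_pdf m).2.2, mul_one]
        _ = W * (|W - 1|/W) := by rw [← Finset.sum_mul, ← hW]
        _ = |W - 1| := by field_simp
        _ ≤ ε₀/4 := hW1
    -- error between g2 and p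
    have err4 : ∫ x, |g2 x - p x| ≤ ε₀/8 := by
      have key : ∀ x, |g2 x - p x| ≤ ∑ m ∈ S.attach, (w m.1/W) * |P m.1 x - Q m x| := by
        intro x
        simp only [hg2, hp]
        rw [← Finset.sum_sub_distrib]
        refine (Finset.abs_sum_le_sum_abs _ _).trans (Finset.sum_le_sum fun m hm => ?_)
        rw [← mul_sub, abs_mul, abs_of_nonneg (div_nonneg (hw_nonneg _) hWpos.le)]
      have iT : ∀ m : {m // m ∈ S}, Integrable (fun x => |P m.1 x - Q m x|) := fun m =>
        ((hP_int m.1).sub (hQ_int m)).abs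
      calc ∫ x, |g2 x - p x| ≤ ∫ x, ∑ m ∈ S.attach, (w m.1/W) * |P m.1 x - Q m x| :=
            integral_mono ((i_g2.sub i_p).abs)
              (integrable_finset_sum _ fun m _ => ((iT m).const_mul _)) key
        _ = ∑ m ∈ S.attach, (w m.1/W) * ∫ x, |P m.1 x - Q m x| := by
            rw [integral_finset_sum _ fun m _ => ((iT m).const_mul _)]
            exact Finset.sum_congr rfl fun m _ => integral_const_mul _ _
        _ ≤ ∑ m ∈ S.attach, (w m.1/W) * (B * δ') := by
            refine Finset.sum_le_sum fun m _ => ?_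
            exact mul_le_mul_of_nonneg_left (hPQ m) (div_nonneg (hw_nonneg _) hWpos.le)
        _ = B * δ' := by rw [← Finset.sum_mul, hsum_w', one_mul]
        _ ≤ ε₀/8 := hBδ
    -- total
    have hpt : ∀ x, |h x - p x| ≤ |h x - k x| + |k x - g x| + |g x - g2 x| + |g2 x - p x| := by
      intro x
      have h2 : h x - p x = (h x - k x) + (k x - g x) + (g x - g2 x) + (g2 x - p x) := by ring
      rw [h2]
      exact le_trans (abs_add_le _ _) (add_le_add (le_trans (abs_add_le _ _)
        (add_le_add (abs_add_le _ _) le_rfl)) le_rfl)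
    have i1 : Integrable (fun x => |h x - k x|) := (hh_int.sub hk_int).abs
    have i2 : Integrable (fun x => |k x - g x|) := (hk_int.sub hg_int).abs
    have i3 : Integrable (fun x => |g x - g2 x|) := (hg_int.sub i_g2).abs
    have i4 : Integrable (fun x => |g2 x - p x|) := (i_g2.sub i_p).abs
    calc ∫ x, |h x - p x|
        ≤ ∫ x, (|h x - k x| + |k x - g x| + |g x - g2 x| + |g2 x - p x|) :=
          integral_mono ((hh_int.sub i_p).abs) (((i1.add i2).add i3).add i4) hpt
      _ = (∫ x, (|h x - k x| + |k x - g x| + |g x - g2 x|)) + ∫ x, |g2 x - p x| :=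
          integral_add ((i1.add i2).add i3) i4
      _ = ((∫ x, (|h x - k x| + |k x - g x|)) + ∫ x, |g x - g2 x|) + ∫ x, |g2 x - p x| :=
          congrArg (· + _) (integral_add (i1.add i2) i3)
      _ = (((∫ x, |h x - k x|) + ∫ x, |k x - g x|) + ∫ x, |g x - g2 x|) + ∫ x, |g2 x - p x| :=
          congrArg (· + _) (congrArg (· + _) (integral_add i1 i2))
      _ ≤ ε₀/8 + ε₀/8 + ε₀/4 + ε₀/8 := by
          exact add_le_add (add_le_add (add_le_add err1 err2) err3) err4
      _ < ε₀ := by linarith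
      _ ≤ ε := hε₀le
  -- Step 8: package as a single convex combination
  refine PDFAux.convex_package
    (κ := Σ m : {m // m ∈ S}, ((i : Fin N) → Fin (Mq m i)))
    (fun mc => (w mc.1.1 / W) * ∏ i, wq mc.1 i (mc.2 i))
    (fun mc x => ∏ i, fq mc.1 i (mc.2 i) (x i))
    ?_
    (fun mc => mul_nonneg (div_nonneg (hw_nonneg _) hWpos.le)
      (Finset.prod_nonneg fun i _ => hwq0 _ _ _))
    ?_ h ?_
  · exact fun mc => ⟨fun i => fq mc.1 i (mc.2 i), fun i => hfqF _ _ _, rfl⟩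
  · rw [← Finset.univ_sigma_univ, Finset.sum_sigma]
    have hinner : ∀ m : {m // m ∈ S},
        (∑ cc : (i : Fin N) → Fin (Mq m i), (w m.1/W) * ∏ i, wq m i (cc i)) = w m.1 / W := by
      intro m
      have hpi := PDFAux.sum_pi_prod (Mq m) (fun i l => wq m i l)
      rw [← Finset.mul_sum, hpi, Finset.prod_eq_one (fun i _ => hwq1 m i), mul_one]
    rw [Finset.sum_congr rfl fun m _ => hinner m]
    rw [Finset.univ_eq_attach]
    exact hsum_w'
  · have hexp : ∀ x, (∑ mc : Σ m : {m // m ∈ S}, ((i : Fin N) → Fin (Mq m i)),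
        ((w mc.1.1/W) * ∏ i, wq mc.1 i (mc.2 i)) * ∏ i, fq mc.1 i (mc.2 i) (x i))
        = ∑ m ∈ S.attach, (w m.1/W) * Q m x := by
      intro x
      rw [← Finset.univ_sigma_univ, Finset.sum_sigma, Finset.univ_eq_attach]
      refine Finset.sum_congr rfl fun m _ => ?_
      calc ∑ cc : (i : Fin N) → Fin (Mq m i),
            ((w m.1/W) * ∏ i, wq m i (cc i)) * ∏ i, fq m i (cc i) (x i)
          = (w m.1/W) * ∑ cc : (i : Fin N) → Fin (Mq m i),
              ∏ i, (wq m i (cc i) * fq m i (cc i) (x i)) := by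
            rw [Finset.mul_sum]
            refine Finset.sum_congr rfl fun cc _ => ?_
            rw [Finset.prod_mul_distrib]
            ring
        _ = (w m.1/W) * ∏ i, ∑ l, wq m i l * fq m i l (x i) := by
            rw [PDFAux.sum_pi_prod (Mq m) (fun i l => wq m i l * fq m i l (x i))]
        _ = (w m.1/W) * Q m x := by simp only [hQ, hq]
    simpa only [hexp] using total
end

section
/- For every N = 2^L, M, and ranks r₀,…,r_{L−1}, there exists a configuration of HT-decomposition parameters satisfying the simplex constraints (a^{0,j,α} ∈ Δ^{M−1}, a^{l,j,γ} ∈ Δ^{r_{l−1}−1}, a^L ∈ Δ^{r_{L−1}−1}), with shared parameters a^{l,j,γ} = a^{l,γ} across j, such that the matricization of the generated tensor A^y has matrix rank at least r^{N/2}, where r := min{r₀, M}. -/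
open Finset

/-- Interleaving of two index tuples: position `k` of the result is `i (k/2)`
if `k` is even and `j (k/2)` if `k` is odd.  Thus `i` provides the odd modes
(1-based) and `j` the even modes of an order-`2n` tensor index. -/
def interleave {M n : ℕ} (i j : Fin n → Fin M) : Fin (2 * n) → Fin M :=
  fun k =>
    if (k : ℕ) % 2 = 0 then i ⟨(k : ℕ) / 2, by have := k.2; omega⟩
    else j ⟨(k : ℕ) / 2, by have := k.2; omega⟩

/-- The matricization `[A]` of an order-`2n` tensor `A` with dimension `M` in
each mode: the `M^n × M^n` matrix (rows indexed by the odd modes, columns by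
the even modes, both in big-endian order). -/
def matricize {M n : ℕ} (A : (Fin (2 * n) → Fin M) → ℝ) :
    Matrix (Fin n → Fin M) (Fin n → Fin M) ℝ :=
  fun i j => A (interleave i j)

/-- The tensors `φ^{l,j,γ}` generated by the Hierarchical Tucker recursion:
`φ^{0,j,γ} = a^{0,j,γ} ∈ ℝ^M` and
`φ^{l+1,j,γ} = Σ_{α < r_l} a^{l+1,j,γ}_α · φ^{l,2j,α} ⊗ φ^{l,2j+1,α}`
(0-based children).  `a0 j γ` are the level-0 vectors and `a l j γ α` the
decomposition coefficients. -/
noncomputable def HTtensor {M : ℕ} (r : ℕ → ℕ) (a0 : ℕ → ℕ → Fin M → ℝ)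
    (a : ℕ → ℕ → ℕ → ℕ → ℝ) :
    (l : ℕ) → ℕ → ℕ → (Fin (2 ^ l) → Fin M) → ℝ
  | 0, j, γ => fun d => a0 j γ (d ⟨0, Nat.one_pos⟩)
  | (l + 1), j, γ => fun d =>
      ∑ α ∈ Finset.range (r l), a (l + 1) j γ α *
        (HTtensor r a0 a l (2 * j) α
            (fun i => d ⟨i.1, lt_of_lt_of_le i.2 (Nat.pow_le_pow_right (by norm_num) l.le_succ)⟩) *
         HTtensor r a0 a l (2 * j + 1) α
            (fun i => d ⟨2 ^ l + i.1, by
              have h := i.2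
              have h2 : 2 ^ (l + 1) = 2 ^ l + 2 ^ l := by rw [pow_succ]; ring
              omega⟩))

noncomputable def myA0 (M : ℕ) : ℕ → ℕ → Fin M → ℝ :=
  fun _ γ m => if (m : ℕ) = γ % M then 1 else 0

noncomputable def myA (rr : ℕ) : ℕ → ℕ → ℕ → ℕ → ℝ :=
  fun l _ _ α => if l = 1 then (if α < rr then ((rr : ℝ))⁻¹ else 0)
                 else (if α = 0 then 1 else 0)

noncomputable def gmat (M rr : ℕ) (d e : Fin M) : ℝ :=
  if d = e ∧ (d : ℕ) < rr then ((rr : ℝ))⁻¹ else 0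

lemma rank_ge (M n rr : ℕ) (hrrM : rr ≤ M) (hrr1 : 1 ≤ rr)
    (B : Matrix (Fin n → Fin M) (Fin n → Fin M) ℝ)
    (hB : ∀ i j, B i j = ∏ k : Fin n, gmat M rr (i k) (j k)) :
    rr ^ n ≤ B.rank := by
  classical
  have hrrR : (0:ℝ) < (rr:ℝ) := by exact_mod_cast hrr1
  have hBdiag : B = Matrix.diagonal
      (fun i : Fin n → Fin M => if ∀ k, ((i k : ℕ)) < rr then ((rr : ℝ))⁻¹ ^ n else 0) := by
    ext i j
    rw [hB]
    by_cases hij : i = j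
    · subst hij
      rw [Matrix.diagonal_apply_eq]
      by_cases hall : ∀ k, ((i k : ℕ)) < rr
      · rw [if_pos hall]
        calc ∏ k : Fin n, gmat M rr (i k) (i k)
            = ∏ _k : Fin n, ((rr : ℝ))⁻¹ := by
              apply Finset.prod_congr rfl
              intro k _
              rw [gmat, if_pos ⟨rfl, hall k⟩]
          _ = ((rr : ℝ))⁻¹ ^ n := by
              rw [Finset.prod_const, Finset.card_univ, Fintype.card_fin]
      · rw [if_neg hall]
        push_neg at hall
        obtain ⟨k0, hk0⟩ := hall
        apply Finset.prod_eq_zero (Finset.mem_univ k0)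
        rw [gmat, if_neg (fun hc => absurd hc.2 (not_lt.mpr hk0))]
    · rw [Matrix.diagonal_apply_ne _ hij]
      obtain ⟨k0, hk0⟩ := Function.ne_iff.mp hij
      apply Finset.prod_eq_zero (Finset.mem_univ k0)
      rw [gmat, if_neg (fun hc => hk0 hc.1)]
  rw [hBdiag, Matrix.rank_diagonal]
  have hcard : rr ^ n = Fintype.card (Fin n → Fin rr) := by
    simp [Fintype.card_fun]
  rw [hcard]
  have hne : ∀ v : Fin n → Fin rr,
      (if ∀ k, (((fun k => (⟨(v k : ℕ), lt_of_lt_of_le (v k).2 hrrM⟩ : Fin M)) k : ℕ)) < rr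
        then ((rr : ℝ))⁻¹ ^ n else 0) ≠ 0 := by
    intro v
    rw [if_pos (fun k => (v k).2)]
    positivity
  apply Fintype.card_le_of_injective
    (fun v => ⟨fun k => ⟨(v k : ℕ), lt_of_lt_of_le (v k).2 hrrM⟩, hne v⟩)
  intro v v' hvv
  funext k
  have h1 := congrFun (Subtype.mk_eq_mk.mp hvv) k
  exact Fin.ext (by simpa using h1)

lemma key (M : ℕ) (r : ℕ → ℕ) (hr : ∀ l, 1 ≤ r l) (hM : 1 ≤ M) :
    ∀ (l j γ : ℕ) (d : ℕ → Fin M),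
      HTtensor r (myA0 M) (myA (min (r 0) M)) (l + 1) j γ (fun k => d k.1)
        = ∏ i ∈ Finset.range (2 ^ l),
            gmat M (min (r 0) M) (d (2 * i)) (d (2 * i + 1)) := by
  set rr := min (r 0) M with hrr
  have hrr1 : 1 ≤ rr := le_min (hr 0) hM
  have hrrM : rr ≤ M := min_le_right _ _
  have hrr0 : rr ≤ r 0 := min_le_left _ _
  intro l
  induction l with
  | zero =>
    intro j γ d
    rw [HTtensor]
    simp only [HTtensor, myA0, myA, pow_zero, Finset.prod_range_one, add_zero,
      eq_self_iff_true, if_true]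
    by_cases h : d 0 = d 1 ∧ ((d 0 : ℕ)) < rr
    · obtain ⟨he, hlt⟩ := h
      rw [Finset.sum_eq_single ((d 0 : ℕ))]
      · have h1 : ((d 0 : ℕ)) % M = (d 0 : ℕ) := Nat.mod_eq_of_lt (d 0).2
        rw [gmat, h1, ← he]
        simp [hlt]
      · intro b _ hb
        by_cases hbrr : b < rr
        · have hbM : b % M = b := Nat.mod_eq_of_lt (lt_of_lt_of_le hbrr hrrM)
          have hne : ¬ ((d 0 : ℕ)) = b := fun hh => hb hh.symm
          rw [hbM]
          simp [hne]
        · simp [hbrr]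
      · intro hmem
        exact absurd (Finset.mem_range.mpr (lt_of_lt_of_le hlt hrr0)) hmem
    · rw [gmat, if_neg h]
      apply Finset.sum_eq_zero
      intro b _
      by_cases hbrr : b < rr
      · have hbM : b % M = b := Nat.mod_eq_of_lt (lt_of_lt_of_le hbrr hrrM)
        rw [hbM]
        by_cases h0 : ((d 0 : ℕ)) = b
        · by_cases h1 : ((d 1 : ℕ)) = b
          · exact absurd ⟨Fin.ext (by omega), by omega⟩ h
          · simp [h1]
        · simp [h0]
      · simp [hbrr]
  | succ l ih =>
    intro j γ d
    rw [HTtensor]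
    dsimp only
    have hsplit : (2:ℕ) ^ (l + 1) = 2 ^ l + 2 ^ l := by rw [pow_succ]; ring
    rw [Finset.sum_eq_single 0]
    · rw [show myA rr (l + 1 + 1) j γ 0 = 1 from by simp [myA], one_mul,
        ih (2 * j) 0 d, ih (2 * j + 1) 0 (fun k => d (2 ^ (l + 1) + k))]
      rw [hsplit, Finset.prod_range_add]
      congr 1
      apply Finset.prod_congr rfl
      intro i _
      have hx : 2 * (2 ^ l + i) = 2 ^ l + 2 ^ l + 2 * i := by ring
      rw [hx, show 2 ^ l + 2 ^ l + (2 * i + 1) = 2 ^ l + 2 ^ l + 2 * i + 1 from by ring]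
    · intro b _ hb
      simp [myA, hb]
    · intro h
      exact absurd (Finset.mem_range.mpr (hr (l + 1))) h

/-- **Existence of HT parameters, satisfying the simplex constraints and shared
across spatial positions, whose tensor has matricization rank at least
`r^{N/2}`, `r = min{r₀, M}`** (the existence part of the depth-efficiency
theorem for generative ConvACs).  The tensor `A^y = φ^{L,1,1}` has order
`N = 2^L`; the top vector `a^L` is represented as the level-`L` coefficient
vector (with a single choice of `j` and `γ`). -/
theorem statement14 (L M : ℕ) (hL : 1 ≤ L) (hM : 1 ≤ M)
    (r : ℕ → ℕ) (hr : ∀ l, 1 ≤ r l) :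
    ∃ (a0 : ℕ → ℕ → Fin M → ℝ) (a : ℕ → ℕ → ℕ → ℕ → ℝ),
      -- level-0 vectors lie in Δ^{M-1}
      (∀ j γ, j < 2 ^ L → γ < r 0 →
        (∀ m, 0 ≤ a0 j γ m) ∧ ∑ m, a0 j γ m = 1) ∧
      -- level-l coefficient vectors (1 ≤ l ≤ L) lie in Δ^{r_{l-1}-1};
      -- level L is the top vector a^L ∈ Δ^{r_{L-1}-1}
      (∀ l j γ, 1 ≤ l → l ≤ L → j < 2 ^ (L - l) → γ < (if l = L then 1 else r l) →
        (∀ α, α < r (l - 1) → 0 ≤ a l j γ α) ∧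
        ∑ α ∈ Finset.range (r (l - 1)), a l j γ α = 1) ∧
      -- the parameters are shared: a^{l,j,γ} = a^{l,γ}
      (∀ l j j' γ, a l j γ = a l j' γ) ∧
      -- the matricization of the generated tensor has rank at least r^{N/2}
      (min (r 0) M) ^ (2 ^ (L - 1)) ≤
        (matricize (fun d : Fin (2 * 2 ^ (L - 1)) → Fin M =>
          HTtensor r a0 a L 0 0 (fun k =>
            d (Fin.cast (by rw [← pow_succ', Nat.sub_add_cancel hL]) k)))).rank := by
  obtain ⟨l, rfl⟩ : ∃ l, L = l + 1 := ⟨L - 1, (Nat.succ_pred_eq_of_pos hL).symm⟩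
  set rr := min (r 0) M with hrrdef
  have hrr1 : 1 ≤ rr := le_min (hr 0) hM
  have hrrM : rr ≤ M := min_le_right _ _
  have hrr0 : rr ≤ r 0 := min_le_left _ _
  refine ⟨myA0 M, myA rr, ?_, ?_, ?_, ?_⟩
  · -- level-0 simplex
    intro j γ _ _
    constructor
    · intro m
      rw [myA0]
      split_ifs <;> norm_num
    · have hγM : γ % M < M := Nat.mod_lt _ hM
      rw [Finset.sum_eq_single (⟨γ % M, hγM⟩ : Fin M)]
      · rw [myA0]; simp
      · intro b _ hb
        rw [myA0]
        exact if_neg (fun h => hb (Fin.ext h))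
      · intro h
        exact absurd (Finset.mem_univ _) h
  · -- level-l simplex
    intro l' j γ hl1 _ _ _
    constructor
    · intro α _
      rw [myA]
      split_ifs <;> positivity
    · by_cases hl'1 : l' = 1
      · subst hl'1
        simp only [myA, eq_self_iff_true, if_true]
        rw [← Finset.sum_filter]
        have hfil : (Finset.range (r (1 - 1))).filter (· < rr) = Finset.range rr := by
          ext x
          simp only [Finset.mem_filter, Finset.mem_range]
          constructor
          · rintro ⟨_, h2⟩; exact h2
          · intro h; exact ⟨lt_of_lt_of_le h hrr0, h⟩
        rw [hfil, Finset.sum_const, Finset.card_range, nsmul_eq_mul]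
        rw [mul_inv_cancel₀]
        exact Nat.cast_ne_zero.mpr (by omega)
      · simp only [myA, if_neg hl'1]
        rw [Finset.sum_eq_single 0]
        · simp
        · intro b _ hb; rw [if_neg hb]
        · intro h
          exact absurd (Finset.mem_range.mpr (hr (l' - 1))) h
  · -- sharing
    intro l' j j' γ
    rfl
  · -- rank bound
    apply rank_ge M (2 ^ (l + 1 - 1)) rr hrrM hrr1
    intro i j
    simp only [matricize]
    set d : ℕ → Fin M :=
      fun m => if hm : m < 2 * 2 ^ l then interleave i j ⟨m, hm⟩ else ⟨0, hM⟩ with hd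
    have harg : (fun k : Fin (2 ^ (l + 1)) =>
        interleave i j (Fin.cast (by rw [← pow_succ', Nat.sub_add_cancel hL]) k))
        = (fun k => d k.1) := by
      funext k
      have hk : (k : ℕ) < 2 * 2 ^ l := by
        have h1 := k.2
        have h2 : (2:ℕ) ^ (l + 1) = 2 * 2 ^ l := by rw [pow_succ]; ring
        omega
      simp only [hd]
      rw [dif_pos hk]
      rfl
    rw [harg, key M r hr hM l 0 0 d]
    rw [← Fin.prod_univ_eq_prod_range (fun k => gmat M rr (d (2 * k)) (d (2 * k + 1))) (2 ^ l)]
    apply Finset.prod_congr rfl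
    intro k _
    have hk1 : (k : ℕ) < 2 ^ l := k.isLt
    have hk2 : 2 * (k : ℕ) < 2 * 2 ^ l := by omega
    have hk3 : 2 * (k : ℕ) + 1 < 2 * 2 ^ l := by omega
    have e1 : (2 * (k : ℕ)) % 2 = 0 := by omega
    have e2 : (2 * (k : ℕ)) / 2 = (k : ℕ) := by omega
    have e3 : ¬ ((2 * (k : ℕ) + 1) % 2 = 0) := by omega
    have e4 : (2 * (k : ℕ) + 1) / 2 = (k : ℕ) := by omega
    congr 1
    · simp only [hd]
      rw [dif_pos hk2]
      simp [interleave, e1, e2]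
    · simp only [hd]
      rw [dif_pos hk3]
      simp [interleave, e3, e4]
end
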